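/- Let 0 ≤ d ≤ c be real numbers. For all φ ∈ [0, 2π), the point √(c + d e^{iφ}) lies in the closed annulus centered at √c with inner radius √(c+d) − √c and outer radius √c − √(c−d); that is, √(c+d) − √c ≤ |√(c + d e^{iφ}) − √c| ≤ √c − √(c−d). -/

import Mathlib

/-- For `0 ≤ d ≤ c` and `φ ∈ [0, 2π)`, the point
`√(c + d e^{iφ})` (principal square root) lies in the closed annulus centered
at `√c` with inner radius `√(c+d) − √c` and outer radius `√c − √(c−d)`. -/
theorem sqrt_of_circle_in_annulus
    (c d : ℝ) (hd0 : 0 ≤ d) (hdc : d ≤ c)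
    (φ : ℝ) (hφ : φ ∈ Set.Ico 0 (2 * Real.pi)) :
    Real.sqrt (c + d) - Real.sqrt c ≤
      ‖(((c : ℂ) + (d : ℂ) * Complex.exp (Complex.I * φ)) ^ (1 / 2 : ℂ)) -
        ((Real.sqrt c : ℝ) : ℂ)‖ ∧
    ‖(((c : ℂ) + (d : ℂ) * Complex.exp (Complex.I * φ)) ^ (1 / 2 : ℂ)) -
        ((Real.sqrt c : ℝ) : ℂ)‖ ≤ Real.sqrt c - Real.sqrt (c - d) := by
  have hc0 : (0:ℝ) ≤ c := le_trans hd0 hdc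
  -- trivial case c = 0
  rcases eq_or_lt_of_le hc0 with hc | hc
  · have hd : d = 0 := le_antisymm (hdc.trans hc.symm.le) hd0
    subst hd
    simp [← hc, Complex.zero_cpow (by norm_num : (1/2:ℂ) ≠ 0)]
  -- main case c > 0
  set w : ℂ := (c:ℂ) + (d:ℂ) * Complex.exp (Complex.I * φ) with hw
  set z : ℂ := w ^ (1/2 : ℂ) with hz
  have hz2 : z ^ 2 = w := by
    rw [hz, show (1/2 : ℂ) = ((2:ℕ):ℂ)⁻¹ by norm_num]
    exact Complex.cpow_nat_inv_pow w two_ne_zero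
  have habs_exp : ‖Complex.exp (Complex.I * φ)‖ = 1 := by
    rw [mul_comm]; exact Complex.norm_exp_ofReal_mul_I φ
  have hwre : w.re = c + d * Real.cos φ := by
    rw [hw, mul_comm Complex.I]
    simp [Complex.exp_ofReal_mul_I_re]
  have hwre_ge : c - d ≤ w.re := by
    rw [hwre]; nlinarith [Real.neg_one_le_cos φ]
  have hwabs_le : ‖w‖ ≤ c + d := by
    calc ‖w‖ ≤ ‖(c:ℂ)‖ + ‖(d:ℂ) * Complex.exp (Complex.I * φ)‖ :=
          norm_add_le _ _
      _ = c + d := by rw [norm_mul, habs_exp, Complex.norm_real, Complex.norm_real,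
            Real.norm_eq_abs, Real.norm_eq_abs,
            abs_of_nonneg hc0, abs_of_nonneg hd0, mul_one]
  have hwabs_ge : c - d ≤ ‖w‖ := le_trans hwre_ge (Complex.re_le_norm w)
  -- Re z ≥ 0
  have hzre : 0 ≤ z.re := by
    rcases eq_or_ne w 0 with h0 | h0
    · rw [hz, h0, Complex.zero_cpow (by norm_num : (1/2:ℂ) ≠ 0)]; simp
    · rw [hz, Complex.cpow_def_of_ne_zero h0, Complex.exp_re]
      apply mul_nonneg (Real.exp_nonneg _)
      apply Real.cos_nonneg_of_mem_Icc
      have h1 := Complex.neg_pi_lt_arg w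
      have h2 := Complex.arg_le_pi w
      constructor
      · simp only [Complex.mul_im, Complex.log_im]
        norm_num
        nlinarith [Real.pi_pos]
      · simp only [Complex.mul_im, Complex.log_im]
        norm_num
        nlinarith [Real.pi_pos]
  -- algebraic facts
  have habsz : ‖z‖ = Real.sqrt ‖w‖ := by
    have : ‖z‖ ^ 2 = ‖w‖ := by
      rw [← norm_pow, hz2]
    rw [← this, Real.sqrt_sq (norm_nonneg z)]
  have hsum : z.re ^ 2 + z.im ^ 2 = ‖w‖ := by
    have h1 : ‖z‖ ^ 2 = ‖w‖ := by rw [← norm_pow, hz2]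
    rw [← h1, Complex.sq_norm, Complex.normSq_apply]; ring
  have hdiff : z.re ^ 2 - z.im ^ 2 = w.re := by
    have := hz2
    rw [sq, Complex.ext_iff] at this
    simp [Complex.mul_re] at this
    nlinarith [this.1]
  have hx2 : c - d ≤ z.re ^ 2 := by nlinarith
  have hxge : Real.sqrt (c - d) ≤ z.re := by
    rw [← Real.sqrt_sq hzre]
    exact Real.sqrt_le_sqrt hx2
  -- product identity
  have hsqc : ((Real.sqrt c : ℝ) : ℂ) ^ 2 = (c:ℂ) := by
    norm_cast; exact Real.sq_sqrt hc0
  have hprod : ‖z - ((Real.sqrt c : ℝ) : ℂ)‖ * ‖z + ((Real.sqrt c : ℝ) : ℂ)‖ = d := by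
    rw [← norm_mul]
    have : (z - ((Real.sqrt c : ℝ) : ℂ)) * (z + ((Real.sqrt c : ℝ) : ℂ))
        = (d:ℂ) * Complex.exp (Complex.I * φ) := by
      have : z ^ 2 - ((Real.sqrt c : ℝ) : ℂ) ^ 2 = (d:ℂ) * Complex.exp (Complex.I * φ) := by
        rw [hz2, hsqc, hw]; ring
      linear_combination this
    rw [this, norm_mul, habs_exp, mul_one, Complex.norm_real, Real.norm_eq_abs,
      abs_of_nonneg hd0]
  set A := ‖z - ((Real.sqrt c : ℝ) : ℂ)‖ with hA
  set B := ‖z + ((Real.sqrt c : ℝ) : ℂ)‖ with hB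
  have hA0 : 0 ≤ A := norm_nonneg _
  have hBle : B ≤ Real.sqrt (c + d) + Real.sqrt c := by
    calc B ≤ ‖z‖ + ‖((Real.sqrt c : ℝ) : ℂ)‖ := norm_add_le _ _
      _ ≤ Real.sqrt (c + d) + Real.sqrt c := by
          rw [habsz, Complex.norm_real, Real.norm_eq_abs,
            abs_of_nonneg (Real.sqrt_nonneg c)]
          exact add_le_add_left (Real.sqrt_le_sqrt hwabs_le) _
  have hBge : Real.sqrt (c - d) + Real.sqrt c ≤ B := by
    calc Real.sqrt (c - d) + Real.sqrt c ≤ z.re + Real.sqrt c := add_le_add_left hxge _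
      _ = (z + ((Real.sqrt c : ℝ) : ℂ)).re := by simp
      _ ≤ B := Complex.re_le_norm _
  have hsc : 0 < Real.sqrt c := Real.sqrt_pos.mpr hc
  have hs1 : Real.sqrt (c + d) ^ 2 = c + d := Real.sq_sqrt (by linarith)
  have hs2 : Real.sqrt (c - d) ^ 2 = c - d := Real.sq_sqrt (by linarith)
  have hs3 : Real.sqrt c ^ 2 = c := Real.sq_sqrt hc0
  constructor
  · nlinarith [Real.sqrt_nonneg (c + d), Real.sqrt_nonneg (c - d)]
  · nlinarith [Real.sqrt_nonneg (c + d), Real.sqrt_nonneg (c - d)]
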